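/- arXiv:1807.05652 — 2 statements merged into one kernel-verified Lean document; each statement's English description precedes it below -/
import Mathlib

section
/- In the balls-into-bins model with an independently, uniformly chosen attack bin, let X be the number of balls in the attack bin and let Y be the maximum number of balls contained in any single bin. Then for every real α and every real y_max, Pr(Y − X < α) ≥ Σ_{k integer, y_max − α < k ≤ n} C(n,k) · (1/m)^k · (1 − 1/m)^(n−k) − Pr(Y > y_max). -/
open MeasureTheory

open Finset

lemma inner_count (m n : ℕ) (u : Fin m) (s : Finset (Fin n)) :
    (univ.filter (fun f : Fin n → Fin m => ∀ i, f i = u ↔ i ∈ s)).card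
      = (m - 1) ^ (n - s.card) := by
  rw [← Fintype.card_subtype]
  rw [Fintype.card_congr (Equiv.subtypePiEquivPi (p := fun i (x : Fin m) => x = u ↔ i ∈ s))]
  rw [Fintype.card_pi]
  have h : ∀ i : Fin n, Fintype.card {x : Fin m // x = u ↔ i ∈ s}
      = if i ∈ s then 1 else m - 1 := by
    intro i
    by_cases h : i ∈ s
    · simp [h, Fintype.card_subtype_eq]
    · simp only [h, iff_false, if_false]
      rw [Fintype.card_subtype_compl (fun x : Fin m => x = u),
        Fintype.card_subtype_eq, Fintype.card_fin]
  simp_rw [h]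
  rw [Finset.prod_ite, Finset.prod_const_one, Finset.prod_const, one_mul]
  congr 1
  have : (univ.filter (fun x => x ∉ s)) = univ \ s := by ext i; simp
  rw [this, Finset.card_univ_diff, Fintype.card_fin]

lemma bin_count (m n : ℕ) (u : Fin m) (k : ℕ) :
    (univ.filter (fun f : Fin n → Fin m =>
        (univ.filter (fun i => f i = u)).card = k)).card
      = n.choose k * (m - 1) ^ (n - k) := by
  rw [Finset.card_eq_sum_card_fiberwise
    (f := fun f : Fin n → Fin m => univ.filter (fun i => f i = u))
    (t := Finset.powersetCard k univ)
    (by intro f hf; simp only [Finset.mem_coe, mem_filter] at hf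
        simp [Finset.mem_powersetCard, hf.2])]
  have hterm : ∀ s ∈ Finset.powersetCard k univ,
      ((univ.filter (fun f : Fin n → Fin m =>
          (univ.filter (fun i => f i = u)).card = k)).filter
        (fun f => univ.filter (fun i => f i = u) = s)).card = (m-1)^(n-k) := by
    intro s hs
    rw [Finset.mem_powersetCard] at hs
    rw [Finset.filter_filter]
    have : ∀ f : Fin n → Fin m,
        ((univ.filter (fun i => f i = u)).card = k ∧
          univ.filter (fun i => f i = u) = s) ↔ (∀ i, f i = u ↔ i ∈ s) := by
      intro f
      constructor
      · rintro ⟨-, h2⟩ i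
        rw [← h2]; simp
      · intro h
        have he : univ.filter (fun i => f i = u) = s := by
          ext i; simpa using h i
        exact ⟨by rw [he, hs.2], he⟩
    rw [Finset.filter_congr (fun f _ => by exact (this f)), inner_count, hs.2]
  rw [Finset.sum_congr rfl hterm, Finset.sum_const, smul_eq_mul,
    Finset.card_powersetCard, Finset.card_univ, Fintype.card_fin]

lemma pair_count (m n : ℕ) (k : ℕ) :
    (univ.filter (fun ω : (Fin n → Fin m) × Fin m =>
        (univ.filter (fun i => ω.1 i = ω.2)).card = k)).card
      = m * (n.choose k * (m - 1) ^ (n - k)) := by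
  rw [Finset.card_eq_sum_card_fiberwise (f := Prod.snd) (t := univ)
    (fun ω _ => Finset.mem_univ _)]
  have hterm : ∀ u : Fin m,
      ((univ.filter (fun ω : (Fin n → Fin m) × Fin m =>
            (univ.filter (fun i => ω.1 i = ω.2)).card = k)).filter
          (fun ω => ω.2 = u)).card
        = n.choose k * (m - 1) ^ (n - k) := by
    intro u
    rw [← bin_count m n u k]
    apply Finset.card_nbij' (i := Prod.fst) (j := fun f => (f, u))
    · intro ω hω
      simp only [Finset.mem_coe, Finset.mem_filter, Finset.mem_univ, true_and] at hω ⊢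
      rw [← hω.2]; exact hω.1
    · intro f hf
      simp only [Finset.mem_coe, Finset.mem_filter, Finset.mem_univ, true_and] at hf ⊢
      exact ⟨hf, trivial⟩
    · intro ω hω
      simp only [Finset.mem_coe, Finset.mem_filter] at hω
      exact Prod.ext rfl hω.2.symm
    · intro f _; rfl
  rw [Finset.sum_congr rfl (fun u _ => hterm u), Finset.sum_const, smul_eq_mul,
    Finset.card_univ, Fintype.card_fin]

open MeasureTheory in
lemma meas_toReal {β : Type*} [Fintype β] [Nonempty β] [MeasurableSpace β]
    [MeasurableSingletonClass β] (p : β → Prop) [DecidablePred p] :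
    ((PMF.uniformOfFintype β).toMeasure {ω | p ω}).toReal
      = (univ.filter p).card / Fintype.card β := by
  have h : ({ω | p ω} : Set β) = ↑(univ.filter p) := by ext x; simp
  rw [h, PMF.toMeasure_apply_finset]
  simp only [PMF.uniformOfFintype_apply]
  rw [Finset.sum_const, nsmul_eq_mul, ENNReal.toReal_mul, ENNReal.toReal_inv]
  simp [div_eq_mul_inv]

lemma ratio_eq (m n k : ℕ) [NeZero m] (hk : k ≤ n) :
    ((m * (n.choose k * (m - 1) ^ (n - k)) : ℕ) : ℝ) / ((m ^ n * m : ℕ) : ℝ)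
      = (n.choose k : ℝ) * (1 / (m : ℝ)) ^ k * (1 - 1 / (m : ℝ)) ^ (n - k) := by
  have hm : 1 ≤ m := Nat.one_le_iff_ne_zero.mpr (NeZero.ne m)
  have hm0 : (m : ℝ) ≠ 0 := Nat.cast_ne_zero.mpr (NeZero.ne m)
  have h1 : (1 - 1 / (m : ℝ)) = ((m : ℝ) - 1) / m := by field_simp
  have hmn : (m : ℝ) ^ n = (m : ℝ) ^ k * (m : ℝ) ^ (n - k) := by
    rw [← pow_add, Nat.add_sub_cancel' hk]
  push_cast [Nat.cast_sub hm]
  rw [h1, div_pow, div_pow, hmn]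
  rw [one_pow]
  field_simp


/-- Balls-into-bins with an independently, uniformly chosen attack bin: with `X` the number of
balls in the attack bin and `Y` the maximum number of balls in any single bin, for every real
`α` and `y_max`,
`Pr(Y − X < α) ≥ Σ_{k ∈ ℕ, y_max − α < k ≤ n} C(n,k)·(1/m)^k·(1 − 1/m)^(n−k) − Pr(Y > y_max)`.
Here the sample point `ω` consists of the placement `ω.1` of the `n` balls into the `m` bins
together with the attack bin `ω.2`. -/
theorem detection_prob_lower_bound (m n : ℕ) [NeZero m] (α ymax : ℝ) :
    ((PMF.uniformOfFintype ((Fin n → Fin m) × Fin m)).toMeasure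
        {ω | ((Finset.univ.sup (fun b : Fin m =>
                (Finset.univ.filter (fun i : Fin n => ω.1 i = b)).card) : ℕ) : ℝ)
              - ((Finset.univ.filter (fun i : Fin n => ω.1 i = ω.2)).card : ℝ) < α}).toReal
    ≥ (∑ k ∈ (Finset.range (n + 1)).filter (fun k : ℕ => ymax - α < (k : ℝ)),
          (n.choose k : ℝ) * (1 / (m : ℝ)) ^ k * (1 - 1 / (m : ℝ)) ^ (n - k))
      - ((PMF.uniformOfFintype ((Fin n → Fin m) × Fin m)).toMeasure
          {ω | ymax < ((Finset.univ.sup (fun b : Fin m =>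
                (Finset.univ.filter (fun i : Fin n => ω.1 i = b)).card) : ℕ) : ℝ)}).toReal := by
  set β := (Fin n → Fin m) × Fin m with hβ
  set X : β → ℕ := fun ω => (Finset.univ.filter (fun i : Fin n => ω.1 i = ω.2)).card with hX
  set Y : β → ℕ := fun ω => Finset.univ.sup (fun b : Fin m =>
      (Finset.univ.filter (fun i : Fin n => ω.1 i = b)).card) with hY
  set μ := (PMF.uniformOfFintype β).toMeasure with hμ
  set A : Set β := {ω | ((Y ω : ℝ)) - (X ω : ℝ) < α} with hA
  set B : Set β := {ω | ymax - α < (X ω : ℝ)} with hB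
  set C : Set β := {ω | ymax < (Y ω : ℝ)} with hC
  -- inclusion
  have hsub : B ⊆ A ∪ C := by
    intro ω hω
    by_cases h : ymax < (Y ω : ℝ)
    · exact Or.inr h
    · push_neg at h
      left
      have : ymax - α < (X ω : ℝ) := hω
      simp only [hA, Set.mem_setOf_eq]
      linarith
  have hle : μ B ≤ μ A + μ C :=
    (measure_mono hsub).trans (measure_union_le _ _)
  have hBle : (μ B).toReal ≤ (μ A).toReal + (μ C).toReal := by
    rw [← ENNReal.toReal_add (measure_ne_top μ A) (measure_ne_top μ C)]
    exact ENNReal.toReal_mono (by simp [ENNReal.add_ne_top, measure_ne_top]) hle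
  -- compute μ B
  have hN : Fintype.card β = m ^ n * m := by
    show Fintype.card ((Fin n → Fin m) × Fin m) = m ^ n * m
    rw [Fintype.card_prod, Fintype.card_fun, Fintype.card_fin, Fintype.card_fin]
  have hXb : ∀ ω : β, X ω ≤ n := by
    intro ω
    calc X ω ≤ (Finset.univ : Finset (Fin n)).card := Finset.card_filter_le _ _
    _ = n := by rw [Finset.card_univ, Fintype.card_fin]
  have hBcard : (univ.filter (fun ω : β => ymax - α < (X ω : ℝ))).card
      = ∑ k ∈ (Finset.range (n + 1)).filter (fun k : ℕ => ymax - α < (k : ℝ)),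
          (univ.filter (fun ω : β => X ω = k)).card := by
    rw [Finset.card_eq_sum_card_fiberwise (f := X)
      (t := (Finset.range (n + 1)).filter (fun k : ℕ => ymax - α < (k : ℝ)))
      (by intro ω hω
          simp only [Finset.mem_coe, Finset.mem_filter, Finset.mem_univ, true_and] at hω
          simp only [Finset.mem_coe, Finset.mem_filter, Finset.mem_range]
          exact ⟨Nat.lt_succ_of_le (hXb ω), hω⟩)]
    refine Finset.sum_congr rfl (fun k hk => ?_)
    simp only [Finset.mem_filter, Finset.mem_range] at hk
    rw [Finset.filter_filter]
    refine congrArg Finset.card (Finset.filter_congr (fun ω _ => ?_))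
    constructor
    · exact fun h => h.2
    · intro h; exact ⟨by rw [h]; exact hk.2, h⟩
  have hμB : (μ B).toReal
      = ∑ k ∈ (Finset.range (n + 1)).filter (fun k : ℕ => ymax - α < (k : ℝ)),
          (n.choose k : ℝ) * (1 / (m : ℝ)) ^ k * (1 - 1 / (m : ℝ)) ^ (n - k) := by
    rw [hB, hμ, meas_toReal (fun ω : β => ymax - α < (X ω : ℝ)), hBcard]
    push_cast [hN]
    rw [Finset.sum_div]
    refine Finset.sum_congr rfl (fun k hk => ?_)
    simp only [Finset.mem_filter, Finset.mem_range] at hk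
    have hkn : k ≤ n := Nat.lt_succ_iff.mp hk.1
    have := ratio_eq m n k hkn
    push_cast at this
    rw [← this, pair_count m n k]
    push_cast
    ring_nf
  have hgoal : (μ A).toReal ≥
      (∑ k ∈ (Finset.range (n + 1)).filter (fun k : ℕ => ymax - α < (k : ℝ)),
          (n.choose k : ℝ) * (1 / (m : ℝ)) ^ k * (1 - 1 / (m : ℝ)) ^ (n - k))
        - (μ C).toReal := by
    rw [← hμB]; linarith
  exact hgoal
end

section
/- Consider n weighted balls thrown independently and uniformly at random into m bins. For a nonnegative weight vector w = (w_1, …, w_n), let S_i(w) denote the total load of the i bins with the highest loads (the load of a bin is the sum of the weights of the balls landing in it). Let w = (w_1, …, w_n) and w' = (w'_1, …, w'_n) be nonincreasing nonnegative weight vectors with Σ_{i=1}^n w_i = Σ_{i=1}^n w'_i and Σ_{i=1}^k w_i ≥ Σ_{i=1}^k w'_i for all 1 ≤ k ≤ n. Then E(S_i(w)) ≥ E(S_i(w')) for all 1 ≤ i ≤ m. -/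
open MeasureTheory

/-- The load of bin `b` when `n` balls with weights `w` are placed according to `ω`. -/
def binLoad {m n : ℕ} (w : Fin n → ℝ) (ω : Fin n → Fin m) (b : Fin m) : ℝ :=
  ∑ j ∈ Finset.univ.filter (fun j : Fin n => ω j = b), w j

/-- `S_i(w)`: the total load of the `i` bins with the highest loads, realized as the maximum,
over all sets `T` of `i` bins, of the total load of `T`. -/
noncomputable def topLoad (m n i : ℕ) (w : Fin n → ℝ) (ω : Fin n → Fin m) : ℝ :=
  ⨆ T : {T : Finset (Fin m) // T.card = i}, ∑ b ∈ T.1, binLoad w ω b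

namespace BallsBinsAux

open scoped ENNReal

variable {m n i : ℕ}

/-- prefix sums -/
def Pk (w : Fin n → ℝ) (k : ℕ) : ℝ :=
  ∑ j ∈ Finset.univ.filter (fun j : Fin n => (j : ℕ) < k), w j

lemma nonempty_sets (him : i ≤ m) : Nonempty {T : Finset (Fin m) // T.card = i} := by
  obtain ⟨t, -, ht⟩ := Finset.exists_subset_card_eq (s := (Finset.univ : Finset (Fin m))) (n := i)
    (by simpa using him)
  exact ⟨⟨t, ht⟩⟩

lemma binLoad_comb (a b : ℝ) (w v : Fin n → ℝ) (ω : Fin n → Fin m) (c : Fin m) :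
    binLoad (fun j => a * w j + b * v j) ω c = a * binLoad w ω c + b * binLoad v ω c := by
  simp [binLoad, Finset.sum_add_distrib, Finset.mul_sum]

lemma binLoad_comp (w : Fin n → ℝ) (e : Equiv.Perm (Fin n)) (ω : Fin n → Fin m) (b : Fin m) :
    binLoad (w ∘ e) ω b = binLoad w (ω ∘ e.symm) b := by
  unfold binLoad
  refine Finset.sum_equiv e (fun j => by simp) (fun j _ => rfl)

lemma topLoad_le (him : i ≤ m) {w : Fin n → ℝ} {ω : Fin n → Fin m} {x : ℝ}
    (h : ∀ T : {T : Finset (Fin m) // T.card = i}, ∑ b ∈ T.1, binLoad w ω b ≤ x) :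
    topLoad m n i w ω ≤ x := by
  haveI := nonempty_sets him
  unfold topLoad
  exact ciSup_le h

lemma le_topLoad {w : Fin n → ℝ} {ω : Fin n → Fin m}
    (T : {T : Finset (Fin m) // T.card = i}) :
    ∑ b ∈ T.1, binLoad w ω b ≤ topLoad m n i w ω := by
  unfold topLoad
  exact le_ciSup (f := fun T : {T : Finset (Fin m) // T.card = i} => ∑ b ∈ T.1, binLoad w ω b)
    (Set.Finite.bddAbove (Set.finite_range _)) T

lemma topLoad_comb (him : i ≤ m) {a b : ℝ} (ha : 0 ≤ a) (hb : 0 ≤ b)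
    (w v : Fin n → ℝ) (ω : Fin n → Fin m) :
    topLoad m n i (fun j => a * w j + b * v j) ω ≤
      a * topLoad m n i w ω + b * topLoad m n i v ω := by
  refine topLoad_le him (fun T => ?_)
  have h1 : ∑ c ∈ T.1, binLoad (fun j => a * w j + b * v j) ω c
      = a * ∑ c ∈ T.1, binLoad w ω c + b * ∑ c ∈ T.1, binLoad v ω c := by
    simp [binLoad_comb, Finset.sum_add_distrib, Finset.mul_sum]
  rw [h1]
  have h2 := le_topLoad (w := w) (ω := ω) T
  have h3 := le_topLoad (w := v) (ω := ω) T
  have := mul_le_mul_of_nonneg_left h2 ha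
  have := mul_le_mul_of_nonneg_left h3 hb
  linarith

lemma topLoad_comp (w : Fin n → ℝ) (e : Equiv.Perm (Fin n)) (ω : Fin n → Fin m) :
    topLoad m n i (w ∘ e) ω = topLoad m n i w (ω ∘ e.symm) := by
  unfold topLoad
  exact iSup_congr fun T => Finset.sum_congr rfl fun b _ => binLoad_comp w e ω b

/-- Expected top-`i` load. -/
noncomputable def G (m n i : ℕ) [NeZero m] (w : Fin n → ℝ) : ℝ :=
  ∫ ω, topLoad m n i w ω ∂(PMF.uniformOfFintype (Fin n → Fin m)).toMeasure

lemma G_eq_sum [NeZero m] (w : Fin n → ℝ) :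
    G m n i w = ∑ ω : Fin n → Fin m,
      ((Fintype.card (Fin n → Fin m) : ℝ≥0∞)⁻¹).toReal * topLoad m n i w ω := by
  rw [G, PMF.integral_eq_sum]
  simp [PMF.uniformOfFintype_apply, smul_eq_mul]

lemma G_comp [NeZero m] (w : Fin n → ℝ) (e : Equiv.Perm (Fin n)) :
    G m n i (w ∘ e) = G m n i w := by
  rw [G_eq_sum, G_eq_sum]
  refine Fintype.sum_equiv (Equiv.arrowCongr e (Equiv.refl (Fin m))) _ _ (fun ω => ?_)
  rw [topLoad_comp]
  rfl

lemma G_comb [NeZero m] (him : i ≤ m) {a b : ℝ} (ha : 0 ≤ a) (hb : 0 ≤ b)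
    (w v : Fin n → ℝ) :
    G m n i (fun j => a * w j + b * v j) ≤ a * G m n i w + b * G m n i v := by
  rw [G_eq_sum, G_eq_sum, G_eq_sum, Finset.mul_sum, Finset.mul_sum,
    ← Finset.sum_add_distrib]
  refine Finset.sum_le_sum (fun ω _ => ?_)
  have hc : (0:ℝ) ≤ ((Fintype.card (Fin n → Fin m) : ℝ≥0∞)⁻¹).toReal := ENNReal.toReal_nonneg
  have h := topLoad_comb (n := n) him ha hb w v ω
  calc ((Fintype.card (Fin n → Fin m) : ℝ≥0∞)⁻¹).toReal * topLoad m n i (fun j => a * w j + b * v j) ω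
      ≤ ((Fintype.card (Fin n → Fin m) : ℝ≥0∞)⁻¹).toReal * (a * topLoad m n i w ω + b * topLoad m n i v ω) :=
        mul_le_mul_of_nonneg_left h hc
    _ = a * (((Fintype.card (Fin n → Fin m) : ℝ≥0∞)⁻¹).toReal * topLoad m n i w ω)
        + b * (((Fintype.card (Fin n → Fin m) : ℝ≥0∞)⁻¹).toReal * topLoad m n i v ω) := by ring

lemma sum_shift {p q : Fin n} (hpq : p ≠ q) (δ : ℝ) (w : Fin n → ℝ) (s : Finset (Fin n)) :
    ∑ j ∈ s, (if j = p then w p - δ else if j = q then w q + δ else w j)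
      = (∑ j ∈ s, w j) + (if p ∈ s then -δ else 0) + (if q ∈ s then δ else 0) := by
  have h : ∀ j ∈ s, (if j = p then w p - δ else if j = q then w q + δ else w j)
      = w j + ((if j = p then -δ else 0) + (if j = q then δ else 0)) := by
    intro j _
    rcases eq_or_ne j p with rfl | hjp
    · rw [if_pos rfl, if_pos rfl, if_neg hpq]; ring
    · rcases eq_or_ne j q with rfl | hjq
      · rw [if_neg hjp, if_pos rfl, if_neg hjp, if_pos rfl]; ring
      · rw [if_neg hjp, if_neg hjq, if_neg hjp, if_neg hjq]; ring
  rw [Finset.sum_congr rfl h, Finset.sum_add_distrib, Finset.sum_add_distrib,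
    Finset.sum_ite_eq' s p (fun _ => -δ), Finset.sum_ite_eq' s q (fun _ => δ)]
  ring

lemma Pk_succ (w : Fin n → ℝ) (p : Fin n) :
    Pk w ((p : ℕ) + 1) = Pk w (p : ℕ) + w p := by
  unfold Pk
  have h : Finset.univ.filter (fun j : Fin n => (j : ℕ) < (p : ℕ) + 1)
      = insert p (Finset.univ.filter (fun j : Fin n => (j : ℕ) < (p : ℕ))) := by
    ext j
    simp only [Finset.mem_filter, Finset.mem_insert, Finset.mem_univ, true_and, Fin.ext_iff]
    omega
  rw [h, Finset.sum_insert (by simp)]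
  ring

lemma key (him : i ≤ m) [NeZero m] (w' : Fin n → ℝ) (hmono' : Antitone w') :
    ∀ d : ℕ, ∀ w : Fin n → ℝ,
      (∑ j, w j = ∑ j, w' j) →
      (∀ k : ℕ, k ≤ n → Pk w' k ≤ Pk w k) →
      ((Finset.univ.filter (fun j : Fin n => w j ≠ w' j)).card ≤ d) →
      G m n i w' ≤ G m n i w := by
  intro d
  induction d with
  | zero =>
    intro w hsum hpre hcard
    have hD : (Finset.univ.filter (fun j : Fin n => w j ≠ w' j)) = ∅ :=
      Finset.card_eq_zero.mp (Nat.le_zero.mp hcard)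
    have hw : w = w' := by
      funext j
      by_contra hj
      have : j ∈ (Finset.univ.filter (fun j : Fin n => w j ≠ w' j)) := by simp [hj]
      simp [hD] at this
    rw [hw]
  | succ d ih =>
    intro w hsum hpre hcard
    set D := Finset.univ.filter (fun j : Fin n => w j ≠ w' j) with hDdef
    by_cases hne : D.Nonempty
    swap
    · -- w = w'
      have hD : D = ∅ := Finset.not_nonempty_iff_eq_empty.mp hne
      have hw : w = w' := by
        funext j
        by_contra hj
        have : j ∈ D := by simp [hDdef, hj]
        simp [hD] at this
      rw [hw]
    -- p : least differing index
    set p := D.min' hne with hpdef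
    have hpD : p ∈ D := D.min'_mem hne
    have hpne : w p ≠ w' p := by simpa [hDdef] using hpD
    have hpmin : ∀ j : Fin n, j < p → w j = w' j := by
      intro j hj
      by_contra hjne
      have : p ≤ j := D.min'_le j (by simp [hDdef, hjne])
      exact absurd hj (not_lt.mpr this)
    -- w' p < w p
    have hPkp : Pk w (p : ℕ) = Pk w' (p : ℕ) := by
      unfold Pk
      refine Finset.sum_congr rfl (fun j hj => ?_)
      simp only [Finset.mem_filter, Finset.mem_univ, true_and] at hj
      exact hpmin j (Fin.lt_def.mpr hj)
    have hplt : w' p < w p := by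
      have h1 := hpre ((p : ℕ) + 1) (Nat.succ_le_of_lt p.isLt)
      rw [Pk_succ, Pk_succ, hPkp] at h1
      have : w' p ≤ w p := by linarith
      exact lt_of_le_of_ne this (Ne.symm hpne)
    -- q : least index above p with w q < w' q
    set E := Finset.univ.filter (fun j : Fin n => p < j ∧ w j < w' j) with hEdef
    have hEne : E.Nonempty := by
      by_contra hE
      have hE' : ∀ j : Fin n, p < j → w' j ≤ w j := by
        intro j hj
        by_contra hlt
        exact hE ⟨j, Finset.mem_filter.mpr ⟨Finset.mem_univ j, hj, not_le.mp hlt⟩⟩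
      have hall : ∀ j ∈ (Finset.univ : Finset (Fin n)), w' j ≤ w j := by
        intro j _
        rcases lt_trichotomy j p with h | h | h
        · exact le_of_eq (hpmin j h).symm
        · subst h; exact hplt.le
        · exact hE' j h
      have := Finset.sum_lt_sum hall ⟨p, Finset.mem_univ p, hplt⟩
      linarith [hsum, this]
    set q := E.min' hEne with hqdef
    have hqE : q ∈ E := E.min'_mem hEne
    have hpq : p < q := by
      have := hqE; simp only [hEdef, Finset.mem_filter, Finset.mem_univ, true_and] at this
      exact this.1
    have hqlt : w q < w' q := by
      have := hqE; simp only [hEdef, Finset.mem_filter, Finset.mem_univ, true_and] at this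
      exact this.2
    have hqmin : ∀ j : Fin n, p < j → j < q → w' j ≤ w j := by
      intro j h1 h2
      by_contra hlt
      have : q ≤ j := E.min'_le j (by simp [hEdef, h1, not_le.mp hlt])
      exact absurd h2 (not_lt.mpr this)
    have hpqne : p ≠ q := ne_of_lt hpq
    -- the transfer
    set δ := min (w p - w' p) (w' q - w q) with hδdef
    have h'pq : w' q ≤ w' p := hmono' hpq.le
    have hδpos : 0 < δ := lt_min (by linarith) (by linarith)
    have hδ1 : δ ≤ w p - w' p := min_le_left _ _
    have hδ2 : δ ≤ w' q - w q := min_le_right _ _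
    have hwq : w q < w p := by linarith
    have hδpq : δ ≤ w p - w q := by linarith
    set t := δ / (w p - w q) with htdef
    have hden : (0:ℝ) < w p - w q := by linarith
    have ht0 : 0 < t := div_pos hδpos hden
    have ht1 : t ≤ 1 := (div_le_one hden).mpr hδpq
    have htδ : t * (w p - w q) = δ := div_mul_cancel₀ δ (ne_of_gt hden)
    set w2 : Fin n → ℝ := fun j => if j = p then w p - δ else if j = q then w q + δ else w j
      with hw2def
    have hcomb : w2 = fun j => (1 - t) * w j + t * w (Equiv.swap p q j) := by
      funext j
      simp only [hw2def]
      rcases eq_or_ne j p with rfl | hjp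
      · rw [if_pos rfl, Equiv.swap_apply_left]
        linear_combination htδ
      · rcases eq_or_ne j q with rfl | hjq
        · rw [if_neg hjp, if_pos rfl, Equiv.swap_apply_right]
          linear_combination -htδ
        · rw [if_neg hjp, if_neg hjq, Equiv.swap_apply_of_ne_of_ne hjp hjq]
          ring
    -- G w2 ≤ G w
    have hGw2 : G m n i w2 ≤ G m n i w := by
      rw [hcomb]
      calc G m n i (fun j => (1 - t) * w j + t * w (Equiv.swap p q j))
          ≤ (1 - t) * G m n i w + t * G m n i (w ∘ Equiv.swap p q) :=
            G_comb him (by linarith) ht0.le w (w ∘ Equiv.swap p q)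
        _ = G m n i w := by rw [G_comp w (Equiv.swap p q)]; ring
    -- hypotheses for IH on w2
    have hsum2 : ∑ j, w2 j = ∑ j, w' j := by
      rw [hw2def, ← hsum, sum_shift hpqne]
      simp
    have hpre2 : ∀ k : ℕ, k ≤ n → Pk w' k ≤ Pk w2 k := by
      intro k hk
      have hPk2 : Pk w2 k = Pk w k
          + (if p ∈ Finset.univ.filter (fun j : Fin n => (j : ℕ) < k) then -δ else 0)
          + (if q ∈ Finset.univ.filter (fun j : Fin n => (j : ℕ) < k) then δ else 0) := by
        unfold Pk
        rw [hw2def, sum_shift hpqne]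
      by_cases hpk : (p : ℕ) < k
      · by_cases hqk : (q : ℕ) < k
        · rw [hPk2]
          simp only [Finset.mem_filter, Finset.mem_univ, true_and, if_pos hpk, if_pos hqk]
          have := hpre k hk
          linarith
        · -- p < k ≤ q : need δ ≤ Pk w k - Pk w' k
          rw [hPk2]
          simp only [Finset.mem_filter, Finset.mem_univ, true_and, if_pos hpk, if_neg hqk]
          have hgap : w p - w' p ≤ Pk w k - Pk w' k := by
            unfold Pk
            rw [← Finset.sum_sub_distrib]
            have hpmem : p ∈ Finset.univ.filter (fun j : Fin n => (j : ℕ) < k) := by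
              simp [hpk]
            have hle : ∀ j ∈ Finset.univ.filter (fun j : Fin n => (j : ℕ) < k),
                (if j = p then w p - w' p else 0) ≤ w j - w' j := by
              intro j hj
              simp only [Finset.mem_filter, Finset.mem_univ, true_and] at hj
              by_cases hjp : j = p
              · subst hjp; simp
              · rw [if_neg hjp]
                rcases lt_trichotomy j p with h | h | h
                · have := hpmin j h; linarith [this]
                · exact absurd h hjp
                · have hjq : j < q := by
                    rw [Fin.lt_def]; omega
                  have := hqmin j h hjq; linarith
            calc w p - w' p = ∑ j ∈ Finset.univ.filter (fun j : Fin n => (j : ℕ) < k),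
                  (if j = p then w p - w' p else 0) := by
                  rw [Finset.sum_ite_eq' _ p (fun _ => w p - w' p), if_pos hpmem]
              _ ≤ _ := Finset.sum_le_sum hle
          linarith
      · -- k ≤ p : sums agree
        rw [hPk2]
        have hqk : ¬ ((q : ℕ) < k) := by
          have : (p : ℕ) < (q : ℕ) := hpq
          omega
        simp only [Finset.mem_filter, Finset.mem_univ, true_and, if_neg hpk, if_neg hqk]
        have := hpre k hk
        linarith
    have hcard2 : (Finset.univ.filter (fun j : Fin n => w2 j ≠ w' j)).card ≤ d := by
      have hDcard : 1 ≤ D.card := Finset.card_pos.mpr hne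
      rcases le_or_gt (w p - w' p) (w' q - w q) with hmin | hmin
      · -- δ = w p - w' p, p is fixed
        have hδeq : δ = w p - w' p := min_eq_left hmin
        have hsub : Finset.univ.filter (fun j : Fin n => w2 j ≠ w' j) ⊆ D.erase p := by
          intro j hj
          simp only [Finset.mem_filter, Finset.mem_univ, true_and] at hj
          rw [Finset.mem_erase]
          by_cases hjp : j = p
          · exfalso; apply hj; subst hjp; simp [hw2def, hδeq]
          · refine ⟨hjp, ?_⟩
            by_cases hjq : j = q
            · subst hjq; simp [hDdef, ne_of_lt hqlt]
            · have : w2 j = w j := by simp [hw2def, hjp, hjq]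
              rw [this] at hj
              simp [hDdef, hj]
        calc (Finset.univ.filter (fun j : Fin n => w2 j ≠ w' j)).card
            ≤ (D.erase p).card := Finset.card_le_card hsub
          _ = D.card - 1 := Finset.card_erase_of_mem hpD
          _ ≤ d := by omega
      · -- δ = w' q - w q, q is fixed
        have hδeq : δ = w' q - w q := min_eq_right hmin.le
        have hqD : q ∈ D := by simp [hDdef, ne_of_lt hqlt]
        have hsub : Finset.univ.filter (fun j : Fin n => w2 j ≠ w' j) ⊆ D.erase q := by
          intro j hj
          simp only [Finset.mem_filter, Finset.mem_univ, true_and] at hj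
          rw [Finset.mem_erase]
          by_cases hjq : j = q
          · exfalso; apply hj; subst hjq; simp [hw2def, hpqne.symm, hδeq]
          · refine ⟨hjq, ?_⟩
            by_cases hjp : j = p
            · subst hjp; simp [hDdef, hpne]
            · have : w2 j = w j := by simp [hw2def, hjp, hjq]
              rw [this] at hj
              simp [hDdef, hj]
        calc (Finset.univ.filter (fun j : Fin n => w2 j ≠ w' j)).card
            ≤ (D.erase q).card := Finset.card_le_card hsub
          _ = D.card - 1 := Finset.card_erase_of_mem hqD
          _ ≤ d := by omega
    exact le_trans (ih w2 hsum2 hpre2 hcard2) hGw2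


end BallsBinsAux

open BallsBinsAux in
/-- Weighted balls-into-bins majorization (Berenbrink et al.): if the nonincreasing nonnegative
weight vector `w` majorizes `w'` (equal total weight and dominating prefix sums), then for every
`1 ≤ i ≤ m`, under independent uniform placement of the `n` balls into the `m` bins,
`E(S_i(w)) ≥ E(S_i(w'))`. -/
theorem expected_topLoad_monotone_of_majorize (m n : ℕ) [NeZero m]
    (w w' : Fin n → ℝ) (hw : ∀ j, 0 ≤ w j) (hw' : ∀ j, 0 ≤ w' j)
    (hmono : Antitone w) (hmono' : Antitone w')
    (hsum : ∑ j, w j = ∑ j, w' j)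
    (hprefix : ∀ k : ℕ, k ≤ n →
      ∑ j ∈ Finset.univ.filter (fun j : Fin n => (j : ℕ) < k), w' j ≤
        ∑ j ∈ Finset.univ.filter (fun j : Fin n => (j : ℕ) < k), w j)
    (i : ℕ) (hi : 1 ≤ i) (him : i ≤ m) :
    ∫ ω, topLoad m n i w' ω ∂(PMF.uniformOfFintype (Fin n → Fin m)).toMeasure ≤
      ∫ ω, topLoad m n i w ω ∂(PMF.uniformOfFintype (Fin n → Fin m)).toMeasure := by
  have h := key (n := n) him w' hmono'
    ((Finset.univ.filter (fun j : Fin n => w j ≠ w' j)).card) w hsum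
    (fun k hk => hprefix k hk) le_rfl
  exact h
end
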